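/- Let A be an n×n SPD matrix, b ∈ ℝⁿ, and x ∈ ℝⁿ. With κ(A) = ‖A‖‖A⁻¹‖, ψ = ‖|A|‖ (spectral norm of the entrywise absolute value of A), and κ̲(A) = ψ‖A⁻¹‖, it holds that ‖A^{-1/2}(|b| + |A|·|x|)‖ ≤ (κ(A)^{1/2} + κ̲(A))‖A⁻¹b‖_A + κ̲(A)‖x − A⁻¹b‖_A, where |·| is taken entrywise. -/

import Mathlib

open Matrix

noncomputable def vnorm {n : ℕ} (x : Fin n → ℝ) : ℝ := Real.sqrt (x ⬝ᵥ x)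

noncomputable def enorm {n : ℕ} (A : Matrix (Fin n) (Fin n) ℝ) (x : Fin n → ℝ) : ℝ :=
  Real.sqrt (A.mulVec x ⬝ᵥ x)

noncomputable def specNorm {m n : ℕ} (M : Matrix (Fin m) (Fin n) ℝ) : ℝ :=
  ⨆ x : {x : Fin n → ℝ // vnorm x = 1}, vnorm (M.mulVec x.1)

noncomputable def eOpNorm {n : ℕ} (A M : Matrix (Fin n) (Fin n) ℝ) : ℝ :=
  ⨆ x : {x : Fin n → ℝ // enorm A x = 1}, enorm A (M.mulVec x.1)

/-- P has full column rank. -/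
def FullColRank {n nc : ℕ} (P : Matrix (Fin n) (Fin nc) ℝ) : Prop :=
  LinearIndependent ℝ (fun j : Fin nc => (fun i : Fin n => P i j))

lemma dot_self_nonneg' {n : ℕ} (x : Fin n → ℝ) : 0 ≤ x ⬝ᵥ x :=
  Finset.sum_nonneg fun _ _ => mul_self_nonneg _
lemma vnorm_sq {n : ℕ} (x : Fin n → ℝ) : vnorm x ^ 2 = x ⬝ᵥ x :=
  Real.sq_sqrt (dot_self_nonneg' x)

lemma vnorm_nonneg {n : ℕ} (x : Fin n → ℝ) : 0 ≤ vnorm x := Real.sqrt_nonneg _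

lemma dot_le_vnorm {n : ℕ} (x y : Fin n → ℝ) : x ⬝ᵥ y ≤ vnorm x * vnorm y := by
  have h : (x ⬝ᵥ y) ^ 2 ≤ (vnorm x * vnorm y) ^ 2 := by
    rw [mul_pow, vnorm_sq, vnorm_sq]
    simpa [dotProduct, sq, Finset.mul_sum, mul_comm] using
      Finset.sum_mul_sq_le_sq_mul_sq Finset.univ x y
  calc x ⬝ᵥ y ≤ |x ⬝ᵥ y| := le_abs_self _
    _ = Real.sqrt ((x ⬝ᵥ y) ^ 2) := (Real.sqrt_sq_eq_abs _).symm
    _ ≤ Real.sqrt ((vnorm x * vnorm y) ^ 2) := Real.sqrt_le_sqrt h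
    _ = vnorm x * vnorm y :=
        Real.sqrt_sq (mul_nonneg (vnorm_nonneg x) (vnorm_nonneg y))

lemma specNorm_bddAbove {m n : ℕ} (M : Matrix (Fin m) (Fin n) ℝ) :
    BddAbove (Set.range fun u : {x : Fin n → ℝ // vnorm x = 1} => vnorm (M.mulVec u.1)) := by
  refine ⟨Real.sqrt (∑ i, ∑ j, M i j ^ 2), ?_⟩
  rintro r ⟨⟨u, hu⟩, rfl⟩
  have hu1 : u ⬝ᵥ u = 1 := by
    have := vnorm_sq u; rw [hu] at this; simpa using this.symm
  refine Real.sqrt_le_sqrt ?_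
  have : ∀ i, (M.mulVec u i) * (M.mulVec u i) ≤ ∑ j, M i j ^ 2 := by
    intro i
    have h := Finset.sum_mul_sq_le_sq_mul_sq Finset.univ (fun j => M i j) u
    have hsum : (∑ j, u j ^ 2) = 1 := by simpa [dotProduct, sq] using hu1
    rw [hsum, mul_one] at h
    simpa [Matrix.mulVec, dotProduct, ← sq] using h
  calc M.mulVec u ⬝ᵥ M.mulVec u = ∑ i, (M.mulVec u i) * (M.mulVec u i) := rfl
    _ ≤ ∑ i, ∑ j, M i j ^ 2 := Finset.sum_le_sum fun i _ => this i

lemma vnorm_smul {n : ℕ} (c : ℝ) (x : Fin n → ℝ) : vnorm (c • x) = |c| * vnorm x := by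
  unfold vnorm
  rw [smul_dotProduct, dotProduct_smul, smul_eq_mul, smul_eq_mul, ← mul_assoc,
    Real.sqrt_mul (mul_self_nonneg c), Real.sqrt_mul_self_eq_abs]

lemma specNorm_nonneg {m n : ℕ} (M : Matrix (Fin m) (Fin n) ℝ) : 0 ≤ specNorm M :=
  Real.iSup_nonneg fun _ => Real.sqrt_nonneg _

lemma vnorm_pos {n : ℕ} {x : Fin n → ℝ} (hx : x ≠ 0) : 0 < vnorm x := by
  rcases Function.ne_iff.1 hx with ⟨i, hi⟩
  refine Real.sqrt_pos.2 ?_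
  refine Finset.sum_pos' (fun j _ => mul_self_nonneg _) ⟨i, Finset.mem_univ i, ?_⟩
  exact mul_self_pos.2 (by simpa using hi)

lemma vnorm_mulVec_le {m n : ℕ} (M : Matrix (Fin m) (Fin n) ℝ) (x : Fin n → ℝ) :
    vnorm (M.mulVec x) ≤ specNorm M * vnorm x := by
  rcases eq_or_ne x 0 with rfl | hx
  · simpa [Matrix.mulVec_zero, vnorm] using
      mul_nonneg (specNorm_nonneg M) (Real.sqrt_nonneg (0 ⬝ᵥ (0 : Fin n → ℝ)))
  · have hpos : 0 < vnorm x := vnorm_pos hx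
    set c := vnorm x
    have hu : vnorm (c⁻¹ • x) = 1 := by
      rw [vnorm_smul, abs_of_pos (inv_pos.2 hpos), inv_mul_cancel₀ hpos.ne']
    have hle := le_ciSup (specNorm_bddAbove M) (⟨c⁻¹ • x, hu⟩ : {x : Fin n → ℝ // vnorm x = 1})
    simp only [Matrix.mulVec_smul, vnorm_smul, abs_of_pos (inv_pos.2 hpos)] at hle
    calc vnorm (M.mulVec x) = c * (c⁻¹ * vnorm (M.mulVec x)) := by
          field_simp
      _ ≤ c * specNorm M := by
          exact mul_le_mul_of_nonneg_left hle hpos.le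
      _ = specNorm M * c := mul_comm _ _

lemma quad_le {n : ℕ} (M : Matrix (Fin n) (Fin n) ℝ) (x : Fin n → ℝ) :
    M.mulVec x ⬝ᵥ x ≤ specNorm M * (x ⬝ᵥ x) := by
  calc M.mulVec x ⬝ᵥ x ≤ vnorm (M.mulVec x) * vnorm x := dot_le_vnorm _ _
    _ ≤ specNorm M * vnorm x * vnorm x :=
        mul_le_mul_of_nonneg_right (vnorm_mulVec_le M x) (Real.sqrt_nonneg _)
    _ = specNorm M * (x ⬝ᵥ x) := by
        rw [mul_assoc, ← sq, vnorm_sq]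


lemma psd_dot {n : ℕ} {M : Matrix (Fin n) (Fin n) ℝ} (hM : M.PosSemidef) (x : Fin n → ℝ) :
    0 ≤ M.mulVec x ⬝ᵥ x := by
  have := hM.dotProduct_mulVec_nonneg x
  rw [dotProduct_comm]; simpa using this

lemma enorm_nonneg {n : ℕ} (M : Matrix (Fin n) (Fin n) ℝ) (x : Fin n → ℝ) :
    0 ≤ enorm M x := Real.sqrt_nonneg _

lemma enorm_sq {n : ℕ} {M : Matrix (Fin n) (Fin n) ℝ} (hM : M.PosSemidef) (x : Fin n → ℝ) :
    enorm M x ^ 2 = M.mulVec x ⬝ᵥ x := Real.sq_sqrt (psd_dot hM x)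

lemma symm_shift {n : ℕ} {M : Matrix (Fin n) (Fin n) ℝ} (hM : Mᵀ = M) (u v : Fin n → ℝ) :
    M.mulVec u ⬝ᵥ v = u ⬝ᵥ M.mulVec v := by
  rw [dotProduct_comm, dotProduct_mulVec, ← Matrix.mulVec_transpose, hM, dotProduct_comm]

lemma enorm_le_sqrt_spec {n : ℕ} {M : Matrix (Fin n) (Fin n) ℝ} (hM : M.PosSemidef)
    (x : Fin n → ℝ) : enorm M x ≤ Real.sqrt (specNorm M) * vnorm x := by
  rw [_root_.enorm, vnorm, ← Real.sqrt_mul (specNorm_nonneg M)]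
  exact Real.sqrt_le_sqrt (quad_le M x)

lemma bilin_cs {n : ℕ} {M : Matrix (Fin n) (Fin n) ℝ} (hM : M.PosSemidef)
    (u v : Fin n → ℝ) : M.mulVec u ⬝ᵥ v ≤ enorm M u * enorm M v := by
  have hsymm : Mᵀ = M := by simpa [Matrix.IsHermitian] using hM.1
  set a := M.mulVec v ⬝ᵥ v
  set bb := M.mulVec u ⬝ᵥ v
  set c := M.mulVec u ⬝ᵥ u
  have key : ∀ t : ℝ, 0 ≤ a * t ^ 2 + (2 * bb) * t + c := by
    intro t
    have h := psd_dot hM (u + t • v)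
    have expand : M.mulVec (u + t • v) ⬝ᵥ (u + t • v)
        = a * t ^ 2 + (2 * bb) * t + c := by
      simp only [Matrix.mulVec_add, Matrix.mulVec_smul, add_dotProduct,
        dotProduct_add, smul_dotProduct, dotProduct_smul, smul_eq_mul]
      have huv : M.mulVec v ⬝ᵥ u = bb := by
        rw [symm_shift hsymm, dotProduct_comm]
      rw [huv]
      ring
    linarith [expand ▸ h]
  have disc : discrim a (2 * bb) c ≤ 0 := by
    rcases eq_or_lt_of_le (psd_dot hM v) with ha | ha
    · -- a = 0 : then linear function nonneg for all t forces bb = 0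
      have hb : bb = 0 := by
        by_contra hb
        have h1 := key ((-c - 1) / (2 * bb))
        have ha0 : a = 0 := ha.symm
        rw [ha0] at h1
        have h2 : (2 * bb) * ((-c - 1) / (2 * bb)) = -c - 1 := by
          field_simp
        rw [h2] at h1; linarith
      have ha' : a = 0 := ha.symm
      rw [discrim, hb, ha']; norm_num
    · exact discrim_le_zero (fun t => by simpa [sq] using key t)
  have hd : bb ^ 2 ≤ a * c := by
    rw [discrim] at disc; nlinarith
  calc bb ≤ |bb| := le_abs_self _
    _ = Real.sqrt (bb ^ 2) := (Real.sqrt_sq_eq_abs _).symm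
    _ ≤ Real.sqrt (c * a) := Real.sqrt_le_sqrt (by nlinarith)
    _ = enorm M u * enorm M v := by
        rw [_root_.enorm, _root_.enorm, ← Real.sqrt_mul (psd_dot hM u)]

lemma enorm_triangle {n : ℕ} {M : Matrix (Fin n) (Fin n) ℝ} (hM : M.PosSemidef)
    (u v : Fin n → ℝ) : enorm M (u + v) ≤ enorm M u + enorm M v := by
  have h : enorm M (u + v) ^ 2 ≤ (enorm M u + enorm M v) ^ 2 := by
    rw [enorm_sq hM]
    have expand : M.mulVec (u + v) ⬝ᵥ (u + v)
        = M.mulVec u ⬝ᵥ u + M.mulVec u ⬝ᵥ v + M.mulVec v ⬝ᵥ u + M.mulVec v ⬝ᵥ v := by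
      simp only [Matrix.mulVec_add, add_dotProduct, dotProduct_add]; ring
    have hsymm : Mᵀ = M := by simpa [Matrix.IsHermitian] using hM.1
    have h1 : M.mulVec u ⬝ᵥ v ≤ enorm M u * enorm M v := bilin_cs hM u v
    have h2 : M.mulVec v ⬝ᵥ u ≤ enorm M u * enorm M v := by
      rw [symm_shift hsymm, dotProduct_comm]; exact h1
    rw [expand]
    have e1 := enorm_sq hM u
    have e2 := enorm_sq hM v
    nlinarith
  calc enorm M (u + v) = Real.sqrt (enorm M (u + v) ^ 2) :=
        (Real.sqrt_sq (enorm_nonneg M _)).symm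
    _ ≤ Real.sqrt ((enorm M u + enorm M v) ^ 2) := Real.sqrt_le_sqrt h
    _ = enorm M u + enorm M v :=
        Real.sqrt_sq (add_nonneg (enorm_nonneg M u) (enorm_nonneg M v))

lemma vnorm_abs {n : ℕ} (x : Fin n → ℝ) : vnorm (fun i => |x i|) = vnorm x := by
  unfold vnorm
  congr 1
  simp [dotProduct, abs_mul_abs_self]

lemma vnorm_triangle {n : ℕ} (u v : Fin n → ℝ) : vnorm (u + v) ≤ vnorm u + vnorm v := by
  have h : vnorm (u + v) ^ 2 ≤ (vnorm u + vnorm v) ^ 2 := by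
    rw [vnorm_sq]
    have huv := dot_le_vnorm u v
    have e1 := vnorm_sq u
    have e2 := vnorm_sq v
    have expand : (u + v) ⬝ᵥ (u + v) = u ⬝ᵥ u + 2 * (u ⬝ᵥ v) + v ⬝ᵥ v := by
      simp only [add_dotProduct, dotProduct_add]
      rw [dotProduct_comm v u]; ring
    nlinarith
  calc vnorm (u + v) = Real.sqrt (vnorm (u + v) ^ 2) := (Real.sqrt_sq (vnorm_nonneg _)).symm
    _ ≤ Real.sqrt ((vnorm u + vnorm v) ^ 2) := Real.sqrt_le_sqrt h
    _ = vnorm u + vnorm v := Real.sqrt_sq (add_nonneg (vnorm_nonneg u) (vnorm_nonneg v))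

open scoped MatrixOrder in
noncomputable def Matrix.PosSemidef.sqrt {n : ℕ} {A : Matrix (Fin n) (Fin n) ℝ}
    (_hA : A.PosSemidef) : Matrix (Fin n) (Fin n) ℝ := CFC.sqrt A

open scoped MatrixOrder in
lemma Matrix.PosSemidef.posSemidef_sqrt {n : ℕ} {A : Matrix (Fin n) (Fin n) ℝ}
    (hA : A.PosSemidef) : hA.sqrt.PosSemidef :=
  Matrix.nonneg_iff_posSemidef.1 (CFC.sqrt_nonneg A)

open scoped MatrixOrder in
lemma Matrix.PosSemidef.sq_sqrt {n : ℕ} {A : Matrix (Fin n) (Fin n) ℝ}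
    (hA : A.PosSemidef) : hA.sqrt ^ 2 = A :=
  CFC.sq_sqrt A (Matrix.nonneg_iff_posSemidef.2 hA)

section sqrtfacts
variable {n : ℕ} {A : Matrix (Fin n) (Fin n) ℝ}

lemma sqrt_mulVec_dot (hA : A.PosDef) (v : Fin n → ℝ) :
    hA.posSemidef.sqrt.mulVec v ⬝ᵥ hA.posSemidef.sqrt.mulVec v = A.mulVec v ⬝ᵥ v := by
  set S := hA.posSemidef.sqrt with hSdef
  have hS : S.PosSemidef := hA.posSemidef.posSemidef_sqrt
  have hsymm : Sᵀ = S := by simpa [Matrix.IsHermitian] using hS.1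
  have hsq : S * S = A := by
    have := hA.posSemidef.sq_sqrt
    rwa [pow_two] at this
  calc S.mulVec v ⬝ᵥ S.mulVec v = S.mulVec (S.mulVec v) ⬝ᵥ v :=
        (symm_shift hsymm (S.mulVec v) v).symm
    _ = A.mulVec v ⬝ᵥ v := by rw [Matrix.mulVec_mulVec, hsq]

lemma enorm_eq_vnorm_sqrt (hA : A.PosDef) (v : Fin n → ℝ) :
    enorm A v = vnorm (hA.posSemidef.sqrt.mulVec v) := by
  rw [_root_.enorm, vnorm, sqrt_mulVec_dot hA]

lemma sqrt_det_isUnit (hA : A.PosDef) : IsUnit hA.posSemidef.sqrt.det := by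
  have hsq : hA.posSemidef.sqrt * hA.posSemidef.sqrt = A := by
    have := hA.posSemidef.sq_sqrt; rwa [pow_two] at this
  have hdet : hA.posSemidef.sqrt.det * hA.posSemidef.sqrt.det = A.det := by
    rw [← Matrix.det_mul, hsq]
  have hAdet : A.det ≠ 0 := hA.det_pos.ne'
  refine isUnit_iff_ne_zero.2 fun h => hAdet ?_
  rw [← hdet, h, mul_zero]

lemma vnorm_le_sqrt_enorm (hA : A.PosDef) (v : Fin n → ℝ) :
    vnorm v ≤ Real.sqrt (specNorm A⁻¹) * enorm A v := by
  set S := hA.posSemidef.sqrt with hSdef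
  have hS : S.PosSemidef := hA.posSemidef.posSemidef_sqrt
  have hsymm : Sᵀ = S := by simpa [Matrix.IsHermitian] using hS.1
  have hsq : S * S = A := by
    have := hA.posSemidef.sq_sqrt; rwa [pow_two] at this
  have hdet : IsUnit S.det := sqrt_det_isUnit hA
  have hinv : A⁻¹ = S⁻¹ * S⁻¹ := by rw [← hsq, Matrix.mul_inv_rev]
  have hsymm' : (S⁻¹)ᵀ = S⁻¹ := by rw [Matrix.transpose_nonsing_inv, hsymm]
  set u := S.mulVec v with hu
  have hv : S⁻¹.mulVec u = v := by
    rw [hu, Matrix.mulVec_mulVec, Matrix.nonsing_inv_mul _ hdet, Matrix.one_mulVec]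
  have key : v ⬝ᵥ v = A⁻¹.mulVec u ⬝ᵥ u := by
    calc v ⬝ᵥ v = S⁻¹.mulVec u ⬝ᵥ S⁻¹.mulVec u := by rw [hv]
      _ = S⁻¹.mulVec (S⁻¹.mulVec u) ⬝ᵥ u := (symm_shift hsymm' (S⁻¹.mulVec u) u).symm
      _ = A⁻¹.mulVec u ⬝ᵥ u := by rw [Matrix.mulVec_mulVec, ← hinv]
  have hle : v ⬝ᵥ v ≤ specNorm A⁻¹ * (A.mulVec v ⬝ᵥ v) := by
    rw [key]
    calc A⁻¹.mulVec u ⬝ᵥ u ≤ specNorm A⁻¹ * (u ⬝ᵥ u) := quad_le _ _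
      _ = specNorm A⁻¹ * (A.mulVec v ⬝ᵥ v) := by rw [hu, sqrt_mulVec_dot hA]
  calc vnorm v = Real.sqrt (v ⬝ᵥ v) := rfl
    _ ≤ Real.sqrt (specNorm A⁻¹ * (A.mulVec v ⬝ᵥ v)) := Real.sqrt_le_sqrt hle
    _ = Real.sqrt (specNorm A⁻¹) * enorm A v := by
        rw [Real.sqrt_mul (specNorm_nonneg _), _root_.enorm]

lemma vnorm_mulVecA_le (hA : A.PosDef) (y : Fin n → ℝ) :
    vnorm (A.mulVec y) ≤ Real.sqrt (specNorm A) * enorm A y := by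
  set S := hA.posSemidef.sqrt with hSdef
  have hsq : S * S = A := by
    have := hA.posSemidef.sq_sqrt; rwa [pow_two] at this
  have hAy : A.mulVec y = S.mulVec (S.mulVec y) := by
    rw [Matrix.mulVec_mulVec, hsq]
  have hle : A.mulVec y ⬝ᵥ A.mulVec y ≤ specNorm A * (A.mulVec y ⬝ᵥ y) := by
    calc A.mulVec y ⬝ᵥ A.mulVec y
        = S.mulVec (S.mulVec y) ⬝ᵥ S.mulVec (S.mulVec y) := by rw [hAy]
      _ = A.mulVec (S.mulVec y) ⬝ᵥ S.mulVec y := sqrt_mulVec_dot hA _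
      _ ≤ specNorm A * (S.mulVec y ⬝ᵥ S.mulVec y) := quad_le _ _
      _ = specNorm A * (A.mulVec y ⬝ᵥ y) := by rw [sqrt_mulVec_dot hA]
  calc vnorm (A.mulVec y) = Real.sqrt (A.mulVec y ⬝ᵥ A.mulVec y) := rfl
    _ ≤ Real.sqrt (specNorm A * (A.mulVec y ⬝ᵥ y)) := Real.sqrt_le_sqrt hle
    _ = Real.sqrt (specNorm A) * enorm A y := by
        rw [Real.sqrt_mul (specNorm_nonneg _), _root_.enorm]

end sqrtfacts

theorem stmt10 {n : ℕ} (A : Matrix (Fin n) (Fin n) ℝ) (hA : A.PosDef)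
    (b x : Fin n → ℝ) :
    enorm A⁻¹ ((fun i => |b i|) + (Matrix.of fun i j => |A i j|).mulVec (fun i => |x i|))
      ≤ (Real.sqrt (specNorm A * specNorm A⁻¹)
            + specNorm (Matrix.of fun i j => |A i j|) * specNorm A⁻¹)
          * enorm A (A⁻¹.mulVec b)
        + specNorm (Matrix.of fun i j => |A i j|) * specNorm A⁻¹
          * enorm A (x - A⁻¹.mulVec b) := by
  set absA := (Matrix.of fun i j => |A i j|) with habsA
  set x₀ := A⁻¹.mulVec b with hx₀
  have hAinv : A⁻¹.PosDef := hA.inv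
  have hAinvPSD : A⁻¹.PosSemidef := hAinv.posSemidef
  have sinv : ℝ := specNorm A⁻¹
  have hs : (0:ℝ) ≤ specNorm A⁻¹ := specNorm_nonneg _
  have hsA : (0:ℝ) ≤ specNorm absA := specNorm_nonneg _
  -- triangle
  have htri : enorm A⁻¹ ((fun i => |b i|) + absA.mulVec (fun i => |x i|))
      ≤ enorm A⁻¹ (fun i => |b i|) + enorm A⁻¹ (absA.mulVec (fun i => |x i|)) :=
    enorm_triangle hAinvPSD _ _
  -- first term
  have hb : A.mulVec x₀ = b := by
    rw [hx₀, Matrix.mulVec_mulVec, Matrix.mul_nonsing_inv _ hA.det_pos.ne'.isUnit,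
      Matrix.one_mulVec]
  have hT1 : enorm A⁻¹ (fun i => |b i|)
      ≤ Real.sqrt (specNorm A * specNorm A⁻¹) * enorm A x₀ := by
    calc enorm A⁻¹ (fun i => |b i|)
        ≤ Real.sqrt (specNorm A⁻¹) * vnorm (fun i => |b i|) :=
          enorm_le_sqrt_spec hAinvPSD _
      _ = Real.sqrt (specNorm A⁻¹) * vnorm b := by rw [vnorm_abs]
      _ = Real.sqrt (specNorm A⁻¹) * vnorm (A.mulVec x₀) := by rw [hb]
      _ ≤ Real.sqrt (specNorm A⁻¹) * (Real.sqrt (specNorm A) * enorm A x₀) :=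
          mul_le_mul_of_nonneg_left (vnorm_mulVecA_le hA x₀) (Real.sqrt_nonneg _)
      _ = Real.sqrt (specNorm A * specNorm A⁻¹) * enorm A x₀ := by
          rw [Real.sqrt_mul (specNorm_nonneg A)]; ring
  -- second term
  have hxsplit : vnorm x ≤ vnorm x₀ + vnorm (x - x₀) := by
    have : x = x₀ + (x - x₀) := by ring_nf
    calc vnorm x = vnorm (x₀ + (x - x₀)) := by rw [← this]
      _ ≤ vnorm x₀ + vnorm (x - x₀) := vnorm_triangle _ _
  have hv0 : vnorm x₀ ≤ Real.sqrt (specNorm A⁻¹) * enorm A x₀ := vnorm_le_sqrt_enorm hA _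
  have hv1 : vnorm (x - x₀) ≤ Real.sqrt (specNorm A⁻¹) * enorm A (x - x₀) :=
    vnorm_le_sqrt_enorm hA _
  have hsqs : Real.sqrt (specNorm A⁻¹) * Real.sqrt (specNorm A⁻¹) = specNorm A⁻¹ :=
    Real.mul_self_sqrt hs
  have hT2 : enorm A⁻¹ (absA.mulVec (fun i => |x i|))
      ≤ specNorm absA * specNorm A⁻¹ * (enorm A x₀ + enorm A (x - x₀)) := by
    have h1 : enorm A⁻¹ (absA.mulVec (fun i => |x i|))
        ≤ Real.sqrt (specNorm A⁻¹) * (specNorm absA * vnorm x) := by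
      calc enorm A⁻¹ (absA.mulVec (fun i => |x i|))
          ≤ Real.sqrt (specNorm A⁻¹) * vnorm (absA.mulVec (fun i => |x i|)) :=
            enorm_le_sqrt_spec hAinvPSD _
        _ ≤ Real.sqrt (specNorm A⁻¹) * (specNorm absA * vnorm (fun i => |x i|)) :=
            mul_le_mul_of_nonneg_left (vnorm_mulVec_le _ _) (Real.sqrt_nonneg _)
        _ = Real.sqrt (specNorm A⁻¹) * (specNorm absA * vnorm x) := by rw [vnorm_abs]
    have h2 : vnorm x ≤ Real.sqrt (specNorm A⁻¹) * (enorm A x₀ + enorm A (x - x₀)) := by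
      calc vnorm x ≤ vnorm x₀ + vnorm (x - x₀) := hxsplit
        _ ≤ Real.sqrt (specNorm A⁻¹) * enorm A x₀
              + Real.sqrt (specNorm A⁻¹) * enorm A (x - x₀) := add_le_add hv0 hv1
        _ = Real.sqrt (specNorm A⁻¹) * (enorm A x₀ + enorm A (x - x₀)) := by ring
    calc enorm A⁻¹ (absA.mulVec (fun i => |x i|))
        ≤ Real.sqrt (specNorm A⁻¹) * (specNorm absA * vnorm x) := h1
      _ ≤ Real.sqrt (specNorm A⁻¹) * (specNorm absA *
            (Real.sqrt (specNorm A⁻¹) * (enorm A x₀ + enorm A (x - x₀)))) := by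
          refine mul_le_mul_of_nonneg_left ?_ (Real.sqrt_nonneg _)
          exact mul_le_mul_of_nonneg_left h2 hsA
      _ = specNorm absA * specNorm A⁻¹ * (enorm A x₀ + enorm A (x - x₀)) := by
          linear_combination (specNorm absA * (enorm A x₀ + enorm A (x - x₀))) * hsqs
  calc enorm A⁻¹ ((fun i => |b i|) + absA.mulVec (fun i => |x i|))
      ≤ enorm A⁻¹ (fun i => |b i|) + enorm A⁻¹ (absA.mulVec (fun i => |x i|)) := htri
    _ ≤ Real.sqrt (specNorm A * specNorm A⁻¹) * enorm A x₀
          + specNorm absA * specNorm A⁻¹ * (enorm A x₀ + enorm A (x - x₀)) :=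
        add_le_add hT1 hT2
    _ = (Real.sqrt (specNorm A * specNorm A⁻¹) + specNorm absA * specNorm A⁻¹)
          * enorm A x₀
        + specNorm absA * specNorm A⁻¹ * enorm A (x - x₀) := by ring
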